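/- Let d ≥ 1, let C be a finite set of classes, let λ > 0, let σ ∈ ℝ^d with σ_i > 0 for all i, and let μ ∈ ℝ^d. Let ν' be the law of a random vector ε' ∈ ℝ^d whose coordinates are independent with ε'_i distributed as the Gaussian N(μ_i, (λσ_i)²). Let f : ℝ^d → C be a measurable classifier, let x ∈ ℝ^d, let c_A ∈ C, and let a > 0 be such that ℙ_{ε'∼ν'}(f(x+ε') = c_A) ≥ Φ(a), where Φ is the cumulative distribution function of the standard normal distribution N(0,1), and ℙ_{ε'∼ν'}(f(x+ε') = c) ≤ 1 − Φ(a) for every class c ≠ c_A. Then for every δ ∈ ℝ^d with ‖δ ⊘ σ‖_2 < λ·a and every class c ≠ c_A, ℙ_{ε'∼ν'}(f(x+δ+ε') = c_A) > ℙ_{ε'∼ν'}(f(x+δ+ε') = c). -/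

import Mathlib

open MeasureTheory

/-- The Euclidean (`ℓ_2`) norm of a vector in `ℝ^d`. -/
noncomputable def l2Norm {d : ℕ} (δ : Fin d → ℝ) : ℝ :=
  (∑ i, δ i ^ 2) ^ ((1 : ℝ) / 2)

/-- The cumulative distribution function `Φ` of the standard normal `N(0,1)`. -/
noncomputable def stdNormalCDF (a : ℝ) : ℝ :=
  (ProbabilityTheory.gaussianReal 0 1 (Set.Iic a)).toReal

open Real ProbabilityTheory
open scoped ENNReal NNReal

lemma my_pdf_shift (m δ t : ℝ) {v : ℝ≥0} (hv : v ≠ 0) :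
    gaussianPDFReal m v t * Real.exp (δ*(t-m)/v - δ^2/(2*v)) = gaussianPDFReal (m+δ) v t := by
  have hv' : (0:ℝ) < v := lt_of_le_of_ne v.2 (by exact_mod_cast (Ne.symm hv))
  unfold gaussianPDFReal
  rw [mul_assoc, ← Real.exp_add]
  congr 1
  field_simp
  ring

lemma my_pdf_conv (m1 m2 x y : ℝ) {v1 v2 : ℝ≥0} (hv1 : v1 ≠ 0) (hv2 : v2 ≠ 0) :
    gaussianPDFReal m1 v1 y * gaussianPDFReal m2 v2 (x - y)
      = gaussianPDFReal (m1+m2) (v1+v2) x *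
        gaussianPDFReal (m1 + v1*(x-m1-m2)/(v1+v2)) (NNReal.mk (v1*v2/(v1+v2)) (by positivity)) y := by
  have h1 : (0:ℝ) < v1 := lt_of_le_of_ne v1.2 (by exact_mod_cast (Ne.symm hv1))
  have h2 : (0:ℝ) < v2 := lt_of_le_of_ne v2.2 (by exact_mod_cast (Ne.symm hv2))
  have h12 : (0:ℝ) < (v1:ℝ) + v2 := by linarith
  unfold gaussianPDFReal
  have hw : (((NNReal.mk (v1*v2/(v1+v2)) (by positivity)) : ℝ≥0) : ℝ) = (v1:ℝ)*v2/((v1:ℝ)+v2) := rfl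
  have hc : (√(2*π*v1))⁻¹ * (√(2*π*v2))⁻¹
      = (√(2*π*((v1:ℝ)+v2)))⁻¹ * (√(2*π*((v1:ℝ)*v2/((v1:ℝ)+v2))))⁻¹ := by
    rw [← mul_inv, ← mul_inv, ← Real.sqrt_mul (by positivity), ← Real.sqrt_mul (by positivity)]
    congr 1
    field_simp
  have hcoe : ((v1+v2 : ℝ≥0) : ℝ) = (v1:ℝ)+v2 := by push_cast; ring
  calc (√(2*π*v1))⁻¹ * rexp (-(y-m1)^2/(2*v1)) * ((√(2*π*v2))⁻¹ * rexp (-(x-y-m2)^2/(2*v2)))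
      = ((√(2*π*v1))⁻¹ * (√(2*π*v2))⁻¹) * rexp (-(y-m1)^2/(2*v1) + -(x-y-m2)^2/(2*v2)) := by
        rw [Real.exp_add]; ring
    _ = ((√(2*π*((v1:ℝ)+v2)))⁻¹ * (√(2*π*((v1:ℝ)*v2/((v1:ℝ)+v2))))⁻¹)
        * rexp (-(x-(m1+m2))^2/(2*((v1:ℝ)+v2))
            + -(y-(m1 + v1*(x-m1-m2)/((v1:ℝ)+v2)))^2/(2*((v1:ℝ)*v2/((v1:ℝ)+v2)))) := by
        rw [hc]
        congr 2
        field_simp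
        ring
    _ = _ := by
        simp only [NNReal.coe_mk, NNReal.coe_add, hw]
        rw [Real.exp_add]; ring

lemma my_gauss_withDensity (m δ : ℝ) {v : ℝ≥0} (hv : v ≠ 0) :
    (gaussianReal m v).withDensity (fun t => ENNReal.ofReal (rexp (δ*(t-m)/v - δ^2/(2*v))))
      = gaussianReal (m+δ) v := by
  rw [gaussianReal_of_var_ne_zero _ hv, gaussianReal_of_var_ne_zero _ hv, ← withDensity_mul]
  · congr 1
    ext t
    simp only [Pi.mul_apply, gaussianPDF]
    rw [← ENNReal.ofReal_mul (gaussianPDFReal_nonneg _ _ _), my_pdf_shift m δ t hv]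
  · exact measurable_gaussianPDF _ _
  · exact (Real.measurable_exp.comp (by fun_prop)).ennreal_ofReal

lemma my_gauss_conv (m1 m2 : ℝ) (v1 v2 : ℝ≥0) :
    Measure.map (fun p : ℝ × ℝ => p.1 + p.2) ((gaussianReal m1 v1).prod (gaussianReal m2 v2))
      = gaussianReal (m1+m2) (v1+v2) := by
  by_cases hv1 : v1 = 0
  · subst hv1
    rw [gaussianReal_zero_var, Measure.dirac_prod, Measure.map_map measurable_add measurable_prodMk_left]
    have : ((fun p : ℝ × ℝ => p.1 + p.2) ∘ Prod.mk m1) = (fun y => m1 + y) := rfl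
    rw [this, gaussianReal_map_const_add, add_comm m2 m1, zero_add]
  by_cases hv2 : v2 = 0
  · subst hv2
    rw [gaussianReal_zero_var, Measure.prod_dirac,
      Measure.map_map measurable_add (measurable_prodMk_right (y := m2))]
    have : ((fun p : ℝ × ℝ => p.1 + p.2) ∘ (fun x => (x, m2))) = (fun y => y + m2) := rfl
    rw [this, gaussianReal_map_add_const, add_zero]
  have hv12 : v1 + v2 ≠ 0 := by simp [hv1]
  ext s hs
  rw [Measure.map_apply measurable_add hs,
    Measure.prod_apply (measurable_add hs)]
  have hsec : ∀ x : ℝ, (Prod.mk x ⁻¹' ((fun p : ℝ × ℝ => p.1 + p.2) ⁻¹' s))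
      = (fun y => x + y) ⁻¹' s := fun x => rfl
  calc ∫⁻ x, gaussianReal m2 v2 (Prod.mk x ⁻¹' ((fun p : ℝ × ℝ => p.1 + p.2) ⁻¹' s)) ∂(gaussianReal m1 v1)
      = ∫⁻ x, (∫⁻ z in s, gaussianPDF (m2+x) v2 z) ∂(gaussianReal m1 v1) := by
        congr 1; ext x
        rw [hsec x, ← Measure.map_apply (measurable_const_add x) hs,
          gaussianReal_map_const_add, gaussianReal_of_var_ne_zero _ hv2,
          withDensity_apply _ hs]
    _ = ∫⁻ x, gaussianPDF m1 v1 x * (∫⁻ z in s, gaussianPDF (m2+x) v2 z) ∂volume := by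
        rw [gaussianReal_of_var_ne_zero _ hv1,
          lintegral_withDensity_eq_lintegral_mul _ (measurable_gaussianPDF _ _)]
        · rfl
        · apply Measurable.lintegral_prod_right (f := fun x z => gaussianPDF (m2+x) v2 z)
          unfold gaussianPDF gaussianPDFReal
          fun_prop
    _ = ∫⁻ x, (∫⁻ z in s, gaussianPDF m1 v1 x * gaussianPDF (m2+x) v2 z) ∂volume := by
        congr 1; ext x
        rw [lintegral_const_mul]
        unfold gaussianPDF gaussianPDFReal
        fun_prop
    _ = ∫⁻ z in s, (∫⁻ x, gaussianPDF m1 v1 x * gaussianPDF (m2+x) v2 z) ∂volume := by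
        apply lintegral_lintegral_swap
        apply Measurable.aemeasurable
        unfold gaussianPDF gaussianPDFReal
        fun_prop
    _ = ∫⁻ z in s, gaussianPDF (m1+m2) (v1+v2) z ∂volume := by
        apply setLIntegral_congr_fun hs
        intro z _
        have hpt : ∀ x : ℝ, gaussianPDF m1 v1 x * gaussianPDF (m2+x) v2 z
            = gaussianPDF (m1+m2) (v1+v2) z *
              gaussianPDF (m1 + v1*(z-m1-m2)/(v1+v2)) (NNReal.mk (v1*v2/(v1+v2)) (by positivity)) x := by
          intro x
          unfold gaussianPDF
          rw [← ENNReal.ofReal_mul (gaussianPDFReal_nonneg _ _ _),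
            ← ENNReal.ofReal_mul (gaussianPDFReal_nonneg _ _ _)]
          congr 1
          rw [← gaussianPDFReal_sub (μ := m2), my_pdf_conv m1 m2 z x hv1 hv2]
        simp_rw [hpt]
        rw [lintegral_const_mul _ (measurable_gaussianPDF _ _),
          lintegral_gaussianPDF_eq_one _ (by
            have h1 : (0:ℝ) < v1 := lt_of_le_of_ne v1.2 (by exact_mod_cast (Ne.symm hv1))
            have h2 : (0:ℝ) < v2 := lt_of_le_of_ne v2.2 (by exact_mod_cast (Ne.symm hv2))
            have h12 : (0:ℝ) < (v1:ℝ) + v2 := by linarith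
            intro h
            rw [← NNReal.coe_eq_zero] at h
            simp only [NNReal.coe_mk] at h
            have : (0:ℝ) < (v1:ℝ)*v2/((v1:ℝ)+v2) := by positivity
            linarith [this, h.ge]), mul_one]
    _ = gaussianReal (m1+m2) (v1+v2) s := by
        rw [gaussianReal_of_var_ne_zero _ hv12, withDensity_apply _ hs]

lemma my_map_linear : ∀ (n : ℕ) (m : Fin n → ℝ) (v : Fin n → ℝ≥0) (u : Fin n → ℝ),
    Measure.map (fun ε : Fin n → ℝ => ∑ i, u i * ε i)
        (Measure.pi fun i => gaussianReal (m i) (v i))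
      = gaussianReal (∑ i, u i * m i) (∑ i, (u i ^ 2).toNNReal * v i) := by
  intro n
  induction n with
  | zero =>
      intro m v u
      rw [Measure.pi_of_empty, Measure.map_dirac' (by fun_prop)]
      simp
  | succ n ih =>
      intro m v u
      have hmp := measurePreserving_piFinSuccAbove
        (fun i : Fin (n+1) => gaussianReal (m i) (v i)) 0
      set e := MeasurableEquiv.piFinSuccAbove (fun _ : Fin (n+1) => ℝ) 0 with he
      have hpi : (Measure.pi fun i => gaussianReal (m i) (v i))
          = Measure.map e.symm ((gaussianReal (m 0) (v 0)).prod
              (Measure.pi fun j : Fin n => gaussianReal (m ((0:Fin (n+1)).succAbove j))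
                (v ((0:Fin (n+1)).succAbove j)))) := by
        rw [← hmp.map_eq, Measure.map_map e.symm.measurable e.measurable]
        simp
      rw [hpi, Measure.map_map (by fun_prop) e.symm.measurable]
      have hcomp : ((fun ε : Fin (n+1) → ℝ => ∑ i, u i * ε i) ∘ e.symm)
          = (fun q : ℝ × ℝ => q.1 + q.2) ∘
            (Prod.map (fun a : ℝ => u 0 * a)
              (fun b : Fin n → ℝ => ∑ j, u (Fin.succ j) * b j)) := by
        ext p
        simp only [Function.comp_apply, Prod.map_apply]
        have : e.symm p = Fin.insertNth 0 p.1 p.2 := rfl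
        rw [this, Fin.sum_univ_succ]
        simp [Fin.zero_succAbove]
      rw [hcomp, ← Measure.map_map measurable_add (by fun_prop),
        ← Measure.map_prod_map _ _ (by fun_prop) (by fun_prop)]
      simp only [Fin.zero_succAbove]
      rw [gaussianReal_map_const_mul, ih (fun j => m (Fin.succ j)) (fun j => v (Fin.succ j))
        (fun j => u (Fin.succ j)), my_gauss_conv]
      have hmk : NNReal.mk (u 0 ^ 2) (sq_nonneg (u 0)) = (u 0 ^ 2).toNNReal := by
        ext
        simp [Real.coe_toNNReal _ (sq_nonneg (u 0))]
      rw [hmk, Fin.sum_univ_succ (f := fun i => u i * m i),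
        Fin.sum_univ_succ (f := fun i => (u i ^ 2).toNNReal * v i)]

lemma my_lintegral_pi_gauss : ∀ (n : ℕ) (m : Fin n → ℝ) (v : Fin n → ℝ≥0)
    (f : Fin n → ℝ → ℝ≥0∞), (∀ i, Measurable (f i)) →
    ∫⁻ x, ∏ i, f i (x i) ∂(Measure.pi fun i => gaussianReal (m i) (v i))
      = ∏ i, ∫⁻ t, f i t ∂(gaussianReal (m i) (v i)) := by
  intro n
  induction n with
  | zero =>
      intro m v f hf
      rw [Measure.pi_of_empty]
      simp [lintegral_dirac]
  | succ n ih =>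
      intro m v f hf
      have hmp := measurePreserving_piFinSuccAbove
        (fun i : Fin (n+1) => gaussianReal (m i) (v i)) 0
      set e := MeasurableEquiv.piFinSuccAbove (fun _ : Fin (n+1) => ℝ) 0 with he
      have hpi : (Measure.pi fun i => gaussianReal (m i) (v i))
          = Measure.map e.symm ((gaussianReal (m 0) (v 0)).prod
              (Measure.pi fun j : Fin n => gaussianReal (m ((0:Fin (n+1)).succAbove j))
                (v ((0:Fin (n+1)).succAbove j)))) := by
        rw [← hmp.map_eq, Measure.map_map e.symm.measurable e.measurable]
        simp
      have hmeas : Measurable (fun x : Fin (n+1) → ℝ => ∏ i, f i (x i)) := by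
        apply Finset.measurable_prod
        intro i _
        exact (hf i).comp (measurable_pi_apply i)
      rw [hpi, lintegral_map hmeas e.symm.measurable]
      have hpt : ∀ p : ℝ × (Fin n → ℝ), (∏ i, f i (e.symm p i))
          = f 0 p.1 * ∏ j, f (Fin.succ j) (p.2 j) := by
        intro p
        have : e.symm p = Fin.insertNth 0 p.1 p.2 := rfl
        rw [this, Fin.prod_univ_succ]
        simp
      simp_rw [hpt]
      rw [lintegral_prod _ (by
        apply Measurable.aemeasurable
        apply Measurable.mul
        · exact (hf 0).comp measurable_fst
        · apply Finset.measurable_prod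
          intro j _
          exact (hf _).comp ((measurable_pi_apply j).comp measurable_snd))]
      simp only []
      have : ∀ a : ℝ, ∫⁻ b, f 0 a * ∏ j, f (Fin.succ j) (b j)
            ∂(Measure.pi fun j : Fin n => gaussianReal (m ((0:Fin (n+1)).succAbove j))
                (v ((0:Fin (n+1)).succAbove j)))
          = f 0 a * ∏ j, ∫⁻ t, f (Fin.succ j) t ∂(gaussianReal (m (Fin.succ j)) (v (Fin.succ j))) := by
        intro a
        rw [lintegral_const_mul _ (by
          apply Finset.measurable_prod
          intro j _
          exact (hf _).comp (measurable_pi_apply j))]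
        congr 1
        have := ih (fun j => m (Fin.succ j)) (fun j => v (Fin.succ j))
          (fun j => f (Fin.succ j)) (fun j => hf _)
        simp only [Fin.zero_succAbove]
        exact this
      simp_rw [this]
      rw [lintegral_mul_const _ (hf 0), Fin.prod_univ_succ]

lemma my_map_add_pi {n : ℕ} (m δ : Fin n → ℝ) (v : Fin n → ℝ≥0) :
    Measure.map (fun ε : Fin n → ℝ => δ + ε) (Measure.pi fun i => gaussianReal (m i) (v i))
      = Measure.pi fun i => gaussianReal (m i + δ i) (v i) := by
  symm
  refine Measure.pi_eq fun s hs => ?_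
  rw [Measure.map_apply (by fun_prop) (MeasurableSet.univ_pi hs)]
  have hpre : (fun ε : Fin n → ℝ => δ + ε) ⁻¹' (Set.pi Set.univ s)
      = Set.pi Set.univ (fun i => (fun t => δ i + t) ⁻¹' s i) := by
    ext ε
    simp [Set.mem_pi, Pi.add_apply]
  rw [hpre, Measure.pi_pi]
  congr 1
  ext i
  rw [← Measure.map_apply (measurable_const_add (δ i)) (hs i), gaussianReal_map_const_add]

lemma my_pi_withDensity {n : ℕ} (m δ : Fin n → ℝ) (v : Fin n → ℝ≥0) (hv : ∀ i, v i ≠ 0) :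
    (Measure.pi fun i => gaussianReal (m i) (v i)).withDensity
        (fun ε => ∏ i, ENNReal.ofReal (rexp (δ i * (ε i - m i)/(v i) - (δ i)^2/(2*(v i)))))
      = Measure.pi fun i => gaussianReal (m i + δ i) (v i) := by
  symm
  refine Measure.pi_eq fun s hs => ?_
  rw [withDensity_apply _ (MeasurableSet.univ_pi hs),
    ← lintegral_indicator (MeasurableSet.univ_pi hs)]
  have hind : (Set.pi Set.univ s).indicator
        (fun ε : Fin n → ℝ => ∏ i, ENNReal.ofReal (rexp (δ i * (ε i - m i)/(v i) - (δ i)^2/(2*(v i)))))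
      = fun ε => ∏ i, (s i).indicator
          (fun t => ENNReal.ofReal (rexp (δ i * (t - m i)/(v i) - (δ i)^2/(2*(v i))))) (ε i) := by
    ext ε
    by_cases h : ε ∈ Set.pi Set.univ s
    · rw [Set.indicator_of_mem h]
      refine Finset.prod_congr rfl fun i _ => ?_
      rw [Set.indicator_of_mem (h i (Set.mem_univ i))]
    · rw [Set.indicator_of_notMem h]
      rw [Set.mem_pi] at h
      push_neg at h
      obtain ⟨i, _, hi⟩ := h
      exact (Finset.prod_eq_zero (Finset.mem_univ i) (Set.indicator_of_notMem hi _)).symm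
  simp only [hind]
  have hlp := my_lintegral_pi_gauss n m v (fun i => (s i).indicator fun t =>
      ENNReal.ofReal (rexp (δ i * (t - m i)/(v i) - (δ i)^2/(2*(v i)))))
    (fun i => (((Real.measurable_exp.comp (by fun_prop :
      Measurable fun t : ℝ => δ i * (t - m i)/(v i) - (δ i)^2/(2*(v i))))).ennreal_ofReal).indicator (hs i))
  rw [hlp]
  refine Finset.prod_congr rfl fun i _ => ?_
  rw [lintegral_indicator (hs i), ← withDensity_apply _ (hs i), my_gauss_withDensity _ _ (hv i)]

lemma my_np_le {α : Type*} [MeasurableSpace α] (P : Measure α) [IsProbabilityMeasure P]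
    (ρ : α → ℝ≥0∞) (hρ : Measurable ρ) {A H : Set α} (hA : MeasurableSet A)
    (hH : MeasurableSet H) (r : ℝ≥0∞)
    (h1 : ∀ ε ∈ H, ρ ε ≤ r) (h2 : ∀ ε ∉ H, r ≤ ρ ε)
    (hPA : P H ≤ P A) :
    (P.withDensity ρ) H ≤ (P.withDensity ρ) A := by
  set Q := P.withDensity ρ with hQ
  have hmono : P (H \ A) ≤ P (A \ H) := by
    have h1' := measure_inter_add_diff (μ := P) H hA
    have h2' := measure_inter_add_diff (μ := P) A hH
    rw [Set.inter_comm H A] at h1'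
    have : P (A ∩ H) + P (H \ A) ≤ P (A ∩ H) + P (A \ H) := by
      rw [h1', h2']; exact hPA.trans (le_of_eq rfl)
    exact (ENNReal.add_le_add_iff_left (measure_ne_top P _)).mp this
  have hsplitH : Q H = Q (A ∩ H) + Q (H \ A) := by
    rw [Set.inter_comm A H]
    exact (measure_inter_add_diff (μ := Q) H hA).symm
  have hsplitA : Q A = Q (A ∩ H) + Q (A \ H) := (measure_inter_add_diff (μ := Q) A hH).symm
  rw [hsplitH, hsplitA]
  refine add_le_add le_rfl ?_
  calc Q (H \ A) = ∫⁻ x in H \ A, ρ x ∂P := withDensity_apply _ (hH.diff hA)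
    _ ≤ ∫⁻ _ in H \ A, r ∂P := setLIntegral_mono measurable_const (fun x hx => h1 x hx.1)
    _ = r * P (H \ A) := setLIntegral_const _ _
    _ ≤ r * P (A \ H) := by gcongr
    _ ≤ ∫⁻ x in A \ H, ρ x ∂P := by
        rw [← setLIntegral_const]
        exact setLIntegral_mono hρ (fun x hx => h2 x hx.2)
    _ = Q (A \ H) := (withDensity_apply _ (hA.diff hH)).symm

lemma my_np_ge {α : Type*} [MeasurableSpace α] (P : Measure α) [IsProbabilityMeasure P]
    (ρ : α → ℝ≥0∞) (hρ : Measurable ρ) {A H : Set α} (hA : MeasurableSet A)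
    (hH : MeasurableSet H) (r : ℝ≥0∞)
    (h1 : ∀ ε ∈ H, r ≤ ρ ε) (h2 : ∀ ε ∉ H, ρ ε ≤ r)
    (hPA : P A ≤ P H) :
    (P.withDensity ρ) A ≤ (P.withDensity ρ) H := by
  set Q := P.withDensity ρ with hQ
  have hmono : P (A \ H) ≤ P (H \ A) := by
    have h1' := measure_inter_add_diff (μ := P) H hA
    have h2' := measure_inter_add_diff (μ := P) A hH
    rw [Set.inter_comm H A] at h1'
    have : P (A ∩ H) + P (A \ H) ≤ P (A ∩ H) + P (H \ A) := by
      rw [h1', h2']; exact hPA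
    exact (ENNReal.add_le_add_iff_left (measure_ne_top P _)).mp this
  have hsplitH : Q H = Q (A ∩ H) + Q (H \ A) := by
    rw [Set.inter_comm A H]
    exact (measure_inter_add_diff (μ := Q) H hA).symm
  have hsplitA : Q A = Q (A ∩ H) + Q (A \ H) := (measure_inter_add_diff (μ := Q) A hH).symm
  rw [hsplitH, hsplitA]
  refine add_le_add le_rfl ?_
  calc Q (A \ H) = ∫⁻ x in A \ H, ρ x ∂P := withDensity_apply _ (hA.diff hH)
    _ ≤ ∫⁻ _ in A \ H, r ∂P := setLIntegral_mono measurable_const (fun x hx => h2 x hx.2)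
    _ = r * P (A \ H) := setLIntegral_const _ _
    _ ≤ r * P (H \ A) := by gcongr
    _ ≤ ∫⁻ x in H \ A, ρ x ∂P := by
        rw [← setLIntegral_const]
        exact setLIntegral_mono hρ (fun x hx => h1 x hx.1)
    _ = Q (H \ A) := (withDensity_apply _ (hH.diff hA)).symm

lemma my_g01_singleton (c : ℝ) : gaussianReal 0 1 {c} = 0 := by
  rw [gaussianReal_of_var_ne_zero _ one_ne_zero,
    withDensity_apply _ (measurableSet_singleton c),
    setLIntegral_measure_zero _ _ Real.volume_singleton]

lemma my_g01_Iio (c : ℝ) : gaussianReal 0 1 (Set.Iio c) = gaussianReal 0 1 (Set.Iic c) := by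
  refine le_antisymm (measure_mono Set.Iio_subset_Iic_self) ?_
  calc gaussianReal 0 1 (Set.Iic c) = gaussianReal 0 1 (Set.Iio c ∪ {c}) := by
        rw [Set.Iio_union_right]
    _ ≤ gaussianReal 0 1 (Set.Iio c) + gaussianReal 0 1 {c} := measure_union_le _ _
    _ = gaussianReal 0 1 (Set.Iio c) := by rw [my_g01_singleton, add_zero]

lemma my_cdf_neg (c : ℝ) : stdNormalCDF (-c) = 1 - stdNormalCDF c := by
  have hmk : NNReal.mk ((-1:ℝ)^2) (sq_nonneg _) = 1 := by ext; norm_num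
  have hmap : Measure.map (fun x : ℝ => (-1) * x) (gaussianReal 0 1) = gaussianReal 0 1 := by
    rw [gaussianReal_map_const_mul, hmk, mul_zero, one_mul]
  have hpre : (fun x : ℝ => (-1) * x) ⁻¹' (Set.Iic (-c)) = Set.Ici c := by
    ext x
    simp only [Set.mem_preimage, Set.mem_Iic, Set.mem_Ici, neg_one_mul, neg_le_neg_iff]
  have h1 : gaussianReal 0 1 (Set.Iic (-c)) = gaussianReal 0 1 (Set.Ici c) := by
    conv_lhs => rw [← hmap]
    rw [Measure.map_apply (by fun_prop) measurableSet_Iic, hpre]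
  have h2 : gaussianReal 0 1 (Set.Ici c) = 1 - gaussianReal 0 1 (Set.Iic c) := by
    rw [← Set.compl_Iio, measure_compl measurableSet_Iio (measure_ne_top _ _), measure_univ,
      my_g01_Iio]
  unfold stdNormalCDF
  rw [h1, h2, ENNReal.toReal_sub_of_le prob_le_one ENNReal.one_ne_top, ENNReal.toReal_one]

lemma my_cdf_zero : stdNormalCDF 0 = 1/2 := by
  have := my_cdf_neg 0
  rw [neg_zero] at this
  linarith

lemma my_cdf_half_lt {z : ℝ} (hz : 0 < z) : 1/2 < stdNormalCDF z := by
  have hpos : 0 < gaussianReal 0 1 (Set.Ioc 0 z) := by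
    rw [gaussianReal_of_var_ne_zero _ one_ne_zero, withDensity_apply _ measurableSet_Ioc]
    have hlow : ENNReal.ofReal (gaussianPDFReal 0 1 z) * volume (Set.Ioc 0 z)
        ≤ ∫⁻ x in Set.Ioc 0 z, gaussianPDF 0 1 x ∂volume := by
      rw [← setLIntegral_const]
      refine setLIntegral_mono' measurableSet_Ioc fun x hx => ?_
      refine ENNReal.ofReal_le_ofReal ?_
      unfold gaussianPDFReal
      refine mul_le_mul_of_nonneg_left ?_ (by positivity)
      refine Real.exp_le_exp.mpr ?_
      have hx2 : x^2 ≤ z^2 := sq_le_sq' (by linarith [hx.1]) hx.2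
      simp only [NNReal.coe_one, sub_zero, mul_one]
      linarith
    have h0 : (0:ℝ≥0∞) < ENNReal.ofReal (gaussianPDFReal 0 1 z) * volume (Set.Ioc 0 z) := by
      apply ENNReal.mul_pos
      · exact (ENNReal.ofReal_pos.mpr (gaussianPDFReal_pos _ _ _ one_ne_zero)).ne'
      · rw [Real.volume_Ioc]
        exact (ENNReal.ofReal_pos.mpr (by linarith)).ne'
    exact h0.trans_le hlow
  have hsplit : gaussianReal 0 1 (Set.Iic z)
      = gaussianReal 0 1 (Set.Iic 0) + gaussianReal 0 1 (Set.Ioc 0 z) := by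
    rw [← measure_union (Set.Iic_disjoint_Ioc le_rfl) measurableSet_Ioc,
      Set.Iic_union_Ioc_eq_Iic hz.le]
  have heq : stdNormalCDF z = stdNormalCDF 0 + (gaussianReal 0 1 (Set.Ioc 0 z)).toReal := by
    unfold stdNormalCDF
    rw [hsplit, ENNReal.toReal_add (measure_ne_top _ _) (measure_ne_top _ _)]
  rw [heq, my_cdf_zero]
  have := ENNReal.toReal_pos hpos.ne' (measure_ne_top _ _)
  linarith

set_option maxHeartbeats 1000000

/-- Certified robustness with independent anisotropic Gaussian noise
`ε'_i ∼ N(μ_i, (λσ_i)²)`: robustness is guaranteed for `‖δ ⊘ σ‖_2 < λ·a`. -/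
theorem gaussian_anisotropic_certified_robustness
    {d : ℕ} (hd : 1 ≤ d)
    {C : Type} [Fintype C] [MeasurableSpace C] [MeasurableSingletonClass C]
    (lam : ℝ) (hlam : 0 < lam)
    (σ : Fin d → ℝ) (hσ : ∀ i, 0 < σ i) (μ : Fin d → ℝ)
    (ν' : Measure (Fin d → ℝ))
    (hν' : ν' = Measure.pi fun i : Fin d =>
      ProbabilityTheory.gaussianReal (μ i) ⟨(lam * σ i) ^ 2, sq_nonneg _⟩)
    (f : (Fin d → ℝ) → C) (hf : Measurable f)
    (x : Fin d → ℝ) (cA : C) (a : ℝ) (ha : 0 < a)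
    (hA : stdNormalCDF a ≤ (ν' {ε' | f (x + ε') = cA}).toReal)
    (hB : ∀ c : C, c ≠ cA →
      (ν' {ε' | f (x + ε') = c}).toReal ≤ 1 - stdNormalCDF a) :
    ∀ δ : Fin d → ℝ, l2Norm (fun i => δ i / σ i) < lam * a →
      ∀ c : C, c ≠ cA →
        (ν' {ε' | f (x + δ + ε') = c}).toReal <
          (ν' {ε' | f (x + δ + ε') = cA}).toReal := by
  subst hν'
  intro δ hδ c hc
  set v : Fin d → ℝ≥0 := fun i => (⟨(lam * σ i) ^ 2, sq_nonneg _⟩ : ℝ≥0) with hvdef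
  have hPeq : (Measure.pi fun i : Fin d =>
        gaussianReal (μ i) ⟨(lam * σ i) ^ 2, sq_nonneg _⟩)
      = Measure.pi fun i : Fin d => gaussianReal (μ i) (v i) := rfl
  rw [hPeq] at hA hB ⊢
  set P := Measure.pi fun i : Fin d => gaussianReal (μ i) (v i) with hPdef
  haveI hPprob : IsProbabilityMeasure P := by rw [hPdef]; infer_instance
  have hσ' : ∀ i, σ i ≠ 0 := fun i => (hσ i).ne'
  have hlam' : lam ≠ 0 := hlam.ne'
  have hvne : ∀ i, v i ≠ 0 := by
    intro i h
    have h0 : ((v i : ℝ≥0) : ℝ) = 0 := by rw [h]; simp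
    have h2 : ((v i : ℝ≥0) : ℝ) = (lam * σ i)^2 := rfl
    have h3 := mul_pos hlam (hσ i)
    nlinarith
  have hcdfA : stdNormalCDF a = (gaussianReal 0 1 (Set.Iic a)).toReal := rfl
  by_cases hδ0 : δ = 0
  · subst hδ0
    simp only [add_zero]
    have h3 := my_cdf_half_lt ha
    have h1 := hA
    have h2 := hB c hc
    linarith
  -- main case
  have hSpos : 0 < ∑ i, (δ i / σ i)^2 := by
    obtain ⟨i, hi⟩ : ∃ i, δ i ≠ 0 := by
      by_contra h
      push_neg at h
      exact hδ0 (funext h)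
    refine Finset.sum_pos' (fun j _ => sq_nonneg _) ⟨i, Finset.mem_univ i, ?_⟩
    exact lt_of_le_of_ne (sq_nonneg _) (Ne.symm (pow_ne_zero 2 (div_ne_zero hi (hσ' i))))
  set S := ∑ i, (δ i / σ i)^2 with hSdef
  have hl2 : l2Norm (fun i => δ i / σ i) = Real.sqrt S := by
    rw [Real.sqrt_eq_rpow]
    norm_num [l2Norm, hSdef]
  set β := Real.sqrt S / lam with hβ
  have hβpos : 0 < β := div_pos (Real.sqrt_pos.mpr hSpos) hlam
  have hβlt : β < a := by
    rw [hβ, div_lt_iff₀ hlam]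
    rw [hl2] at hδ
    linarith [hδ, mul_comm a lam]
  have hβsq : β^2 = S / lam^2 := by
    rw [hβ, div_pow, Real.sq_sqrt hSpos.le]
  set u : Fin d → ℝ := fun i => δ i / (lam * σ i)^2 with hu
  set t : (Fin d → ℝ) → ℝ := fun ε => ∑ i, u i * ε i with htdef
  have ht : Measurable t :=
    Finset.measurable_sum (f := fun i (ε : Fin d → ℝ) => u i * ε i) Finset.univ (fun i _ => by fun_prop)
  set m₀ := ∑ i, u i * μ i with hm₀
  have key1 : ∑ i, u i * δ i = β^2 := by
    rw [hβsq, hSdef, Finset.sum_div]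
    refine Finset.sum_congr rfl fun i _ => ?_
    rw [hu]
    field_simp
  have key2 : ∀ ε : Fin d → ℝ, t (δ + ε) = β^2 + t ε := by
    intro ε
    rw [htdef]
    simp only [Pi.add_apply, mul_add]
    rw [Finset.sum_add_distrib, key1]
  have hvar : ((∑ i, ((u i)^2).toNNReal * v i : ℝ≥0) : ℝ) = β^2 := by
    push_cast
    rw [hβsq, hSdef, Finset.sum_div]
    refine Finset.sum_congr rfl fun i _ => ?_
    rw [Real.coe_toNNReal _ (sq_nonneg (u i)), hu]
    have hvcoe : ((v i : ℝ≥0) : ℝ) = (lam * σ i)^2 := rfl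
    rw [hvcoe]
    field_simp [hσ' i, hlam']
  have hmapt : Measure.map t P = gaussianReal m₀ (∑ i, ((u i)^2).toNNReal * v i) :=
    my_map_linear d μ v u
  have hPt : ∀ w : ℝ, P {ε | t ε ≤ w} = gaussianReal 0 1 (Set.Iic ((w - m₀)/β)) := by
    intro w
    have h1 : {ε : Fin d → ℝ | t ε ≤ w} = t ⁻¹' (Set.Iic w) := rfl
    rw [h1, ← Measure.map_apply ht measurableSet_Iic, hmapt]
    have hVmk : (∑ i, ((u i)^2).toNNReal * v i) = (β^2).toNNReal * 1 := by
      apply NNReal.coe_injective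
      rw [hvar]
      simp [Real.coe_toNNReal _ (sq_nonneg β)]
    rw [hVmk]
    have hgm : gaussianReal m₀ ((β^2).toNNReal * 1)
        = Measure.map (fun z => m₀ + β * z) (gaussianReal 0 1) := by
      have h2 : (fun z : ℝ => m₀ + β * z) = (fun z => z + m₀) ∘ (fun z : ℝ => β * z) := by
        ext z
        simp [add_comm]
      rw [h2, ← Measure.map_map (by fun_prop) (by fun_prop), gaussianReal_map_const_mul,
        gaussianReal_map_add_const, mul_zero, zero_add]
      congr 1
      apply NNReal.coe_injective
      simp [Real.coe_toNNReal _ (sq_nonneg β)]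
    rw [hgm, Measure.map_apply (by fun_prop) measurableSet_Iic]
    congr 1
    ext z
    simp only [Set.mem_preimage, Set.mem_Iic]
    rw [le_div_iff₀ hβpos]
    constructor
    · intro h; nlinarith
    · intro h; nlinarith
  set ρ : (Fin d → ℝ) → ℝ≥0∞ := fun ε => ENNReal.ofReal (rexp (t ε - m₀ - β^2/2)) with hρdef
  have hρmeas : Measurable ρ :=
    (Real.measurable_exp.comp ((ht.sub_const m₀).sub_const (β^2/2))).ennreal_ofReal
  have hmeasadd : Measurable (fun ε : Fin d → ℝ => δ + ε) := by fun_prop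
  have hQ : Measure.map (fun ε => δ + ε) P = P.withDensity ρ := by
    rw [hPdef, my_map_add_pi μ δ v, ← my_pi_withDensity μ δ v hvne]
    congr 1
    funext ε
    rw [← ENNReal.ofReal_prod_of_nonneg (fun i _ => (Real.exp_pos _).le), ← Real.exp_sum]
    congr 1
    congr 1
    have hterm : ∀ i : Fin d, δ i * (ε i - μ i)/((v i : ℝ≥0):ℝ) - (δ i)^2/(2*((v i : ℝ≥0):ℝ))
        = u i * ε i - u i * μ i - (u i * δ i)/2 := by
      intro i
      have hvcoe : ((v i : ℝ≥0) : ℝ) = (lam * σ i)^2 := rfl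
      have hV : (0:ℝ) < (lam * σ i)^2 := pow_pos (mul_pos hlam (hσ i)) 2
      simp only [hvcoe, hu]
      field_simp
    calc ∑ i, (δ i * (ε i - μ i)/((v i : ℝ≥0):ℝ) - (δ i)^2/(2*((v i : ℝ≥0):ℝ)))
        = ∑ i, (u i * ε i - u i * μ i - (u i * δ i)/2) :=
          Finset.sum_congr rfl (fun i _ => hterm i)
      _ = (∑ i, u i * ε i) - (∑ i, u i * μ i) - (∑ i, u i * δ i)/2 := by
          rw [Finset.sum_sub_distrib, Finset.sum_sub_distrib, Finset.sum_div]
      _ = t ε - m₀ - β^2/2 := by rw [key1]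
  haveI hQprob : IsProbabilityMeasure (P.withDensity ρ) := by
    rw [← hQ]
    exact Measure.isProbabilityMeasure_map hmeasadd.aemeasurable
  -- sets
  have hmeasxA : MeasurableSet {ε : Fin d → ℝ | f (x + ε) = cA} :=
    (hf.comp (by fun_prop : Measurable fun ε : Fin d → ℝ => x + ε))
      (measurableSet_singleton cA)
  have hmeasxB : MeasurableSet {ε : Fin d → ℝ | f (x + ε) = c} :=
    (hf.comp (by fun_prop : Measurable fun ε : Fin d → ℝ => x + ε))
      (measurableSet_singleton c)
  have hgoal : ∀ c' : C, {ε : Fin d → ℝ | f (x + δ + ε) = c'}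
      = (fun ε => δ + ε) ⁻¹' {ε | f (x + ε) = c'} := by
    intro c'
    ext ε
    simp only [Set.mem_setOf_eq, Set.mem_preimage, add_assoc]
  have hHmeas : MeasurableSet {ε : Fin d → ℝ | t ε ≤ m₀ + β * a} := ht measurableSet_Iic
  -- NP bounds
  set r : ℝ≥0∞ := ENNReal.ofReal (rexp (β * a - β^2/2)) with hrdef
  have hPH : P {ε | t ε ≤ m₀ + β * a} = gaussianReal 0 1 (Set.Iic a) := by
    have h5 : m₀ + β * a - m₀ = β * a := by ring
    rw [hPt, h5, mul_div_cancel_left₀ _ hβpos.ne']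
  have hPH' : P {ε | t ε ≤ m₀ + β * a - β^2} = gaussianReal 0 1 (Set.Iic (a - β)) := by
    have h5 : m₀ + β * a - β^2 - m₀ = β * (a - β) := by ring
    rw [hPt, h5, mul_div_cancel_left₀ _ hβpos.ne']
  have hpreH : (fun ε : Fin d → ℝ => δ + ε) ⁻¹' {ε | t ε ≤ m₀ + β * a}
      = {ε | t ε ≤ m₀ + β * a - β^2} := by
    ext ε
    simp only [Set.mem_preimage, Set.mem_setOf_eq, key2 ε]
    constructor <;> intro h <;> linarith
  -- lower bound for class cA
  have hNP1 : (P.withDensity ρ) {ε | t ε ≤ m₀ + β * a}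
      ≤ (P.withDensity ρ) {ε | f (x + ε) = cA} := by
    refine my_np_le P ρ hρmeas hmeasxA hHmeas r ?_ ?_ ?_
    · intro ε hε
      exact ENNReal.ofReal_le_ofReal (Real.exp_le_exp.mpr (by
        simp only [Set.mem_setOf_eq] at hε; linarith))
    · intro ε hε
      simp only [Set.mem_setOf_eq, not_le] at hε
      exact ENNReal.ofReal_le_ofReal (Real.exp_le_exp.mpr (by linarith))
    · rw [hPH]
      exact (ENNReal.toReal_le_toReal (measure_ne_top _ _) (measure_ne_top _ _)).mp hA
  have hQHval : (P.withDensity ρ) {ε | t ε ≤ m₀ + β * a} = gaussianReal 0 1 (Set.Iic (a - β)) := by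
    rw [← hQ, Measure.map_apply hmeasadd hHmeas, hpreH, hPH']
  have hlow : stdNormalCDF (a - β) ≤ ((P.withDensity ρ) {ε | f (x + ε) = cA}).toReal := by
    have := (ENNReal.toReal_le_toReal (measure_ne_top _ _) (measure_ne_top _ _)).mpr hNP1
    rw [hQHval] at this
    exact this
  -- upper bound for class c
  have hH2 : {ε : Fin d → ℝ | m₀ + β * a < t ε} = {ε | t ε ≤ m₀ + β * a}ᶜ := by
    ext ε
    simp [not_le]
  have hH2meas : MeasurableSet {ε : Fin d → ℝ | m₀ + β * a < t ε} := by
    rw [hH2]; exact hHmeas.compl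
  have hPH2 : P {ε | m₀ + β * a < t ε} = 1 - gaussianReal 0 1 (Set.Iic a) := by
    rw [hH2, measure_compl hHmeas (measure_ne_top _ _), measure_univ, hPH]
  have hNP2 : (P.withDensity ρ) {ε | f (x + ε) = c}
      ≤ (P.withDensity ρ) {ε | m₀ + β * a < t ε} := by
    refine my_np_ge P ρ hρmeas hmeasxB hH2meas r ?_ ?_ ?_
    · intro ε hε
      simp only [Set.mem_setOf_eq] at hε
      exact ENNReal.ofReal_le_ofReal (Real.exp_le_exp.mpr (by linarith))
    · intro ε hε
      simp only [Set.mem_setOf_eq, not_lt] at hε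
      exact ENNReal.ofReal_le_ofReal (Real.exp_le_exp.mpr (by linarith))
    · rw [hPH2]
      refine (ENNReal.toReal_le_toReal (measure_ne_top _ _)
        (ne_top_of_le_ne_top ENNReal.one_ne_top tsub_le_self)).mp ?_
      rw [ENNReal.toReal_sub_of_le prob_le_one ENNReal.one_ne_top, ENNReal.toReal_one]
      exact hB c hc
  have hQH2val : (P.withDensity ρ) {ε | m₀ + β * a < t ε}
      = 1 - gaussianReal 0 1 (Set.Iic (a - β)) := by
    rw [← hQ, Measure.map_apply hmeasadd hH2meas]
    have hpre2 : (fun ε : Fin d → ℝ => δ + ε) ⁻¹' {ε | m₀ + β * a < t ε}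
        = {ε : Fin d → ℝ | t ε ≤ m₀ + β * a - β^2}ᶜ := by
      ext ε
      simp only [Set.mem_preimage, Set.mem_setOf_eq, key2 ε, Set.mem_compl_iff, not_le]
      constructor <;> intro h <;> linarith
    have hm' : MeasurableSet {ε : Fin d → ℝ | t ε ≤ m₀ + β * a - β^2} := ht measurableSet_Iic
    rw [hpre2, measure_compl hm' (measure_ne_top _ _), measure_univ, hPH']
  have hup : ((P.withDensity ρ) {ε | f (x + ε) = c}).toReal ≤ 1 - stdNormalCDF (a - β) := by
    have h := (ENNReal.toReal_le_toReal (measure_ne_top _ _) (measure_ne_top _ _)).mpr hNP2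
    rw [hQH2val, ENNReal.toReal_sub_of_le prob_le_one ENNReal.one_ne_top,
      ENNReal.toReal_one] at h
    exact h
  have h3 := my_cdf_half_lt (by linarith : (0:ℝ) < a - β)
  rw [hgoal c, hgoal cA, ← Measure.map_apply hmeasadd hmeasxB,
    ← Measure.map_apply hmeasadd hmeasxA, hQ]
  linarith
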